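/- Let n1, n2 ≥ 1. There exists a constant C > 0 depending only on n1 and n2 with the following property. Let E ⊆ ℂ be a subfield with [E:ℚ] = n1, let b₀,…,b_{n2−1} ∈ E be elements that generate E over ℚ, let g = X^{n2} + Σ_{i<n2} b_i X^i ∈ E[X], and let f = ∏_{σ : E →+* ℂ} σg ∈ ℂ[X], where σg is obtained by applying the embedding σ to each coefficient of g. Then for every i ∈ {0,…,n2−1}, P_E(b_i) ≤ C · max_j |coeff_j(f)|. -/

import Mathlib

open Polynomial

noncomputable def Complex.abs : AbsoluteValue ℂ ℝ := NormedField.toAbsoluteValue ℂ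

theorem Complex.norm_eq_abs (z : ℂ) : ‖z‖ = Complex.abs z := rfl

theorem Complex.abs_conj (z : ℂ) : Complex.abs ((starRingEnd ℂ) z) = Complex.abs z :=
  Complex.norm_conj z

theorem Complex.abs_natCast (n : ℕ) : Complex.abs (n : ℂ) = n := Complex.norm_natCast n

theorem Complex.normSq_eq_abs (z : ℂ) : Complex.normSq z = Complex.abs z ^ 2 :=
  Complex.normSq_eq_norm_sq z

theorem Complex.abs_exp (z : ℂ) : Complex.abs (Complex.exp z) = Real.exp z.re :=
  Complex.norm_exp z

namespace CHBAux


/-- product of `max 1 |a|` over a multiset of complex numbers. -/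
noncomputable def mah (s : Multiset ℂ) : ℝ :=
  (s.map fun a => max 1 (Complex.abs a)).prod

lemma one_le_mah (s : Multiset ℂ) : 1 ≤ mah s := by
  induction s using Multiset.induction_on with
  | empty => simp [mah]
  | cons a t ih =>
      simp only [mah, Multiset.map_cons, Multiset.prod_cons] at *
      nlinarith [le_max_left 1 (Complex.abs a)]

lemma mah_nonneg (s : Multiset ℂ) : 0 ≤ mah s := zero_le_one.trans (one_le_mah s)

lemma prod_abs_le_mah_self (t : Multiset ℂ) : (t.map Complex.abs).prod ≤ mah t := by
  induction t using Multiset.induction_on with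
  | empty => simp [mah]
  | cons a t ih =>
      simp only [mah, Multiset.map_cons, Multiset.prod_cons] at *
      have h0 : (0:ℝ) ≤ (t.map Complex.abs).prod := by
        refine Multiset.prod_nonneg fun x hx => ?_
        obtain ⟨c, -, rfl⟩ := Multiset.mem_map.1 hx
        exact AbsoluteValue.nonneg _ _
      exact mul_le_mul (le_max_right _ _) ih h0
        (zero_le_one.trans (le_max_left _ _))

lemma mah_mono {t s : Multiset ℂ} (h : t ≤ s) : mah t ≤ mah s := by
  obtain ⟨u, rfl⟩ := Multiset.le_iff_exists_add.1 h
  simp only [mah, Multiset.map_add, Multiset.prod_add]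
  exact le_mul_of_one_le_right (mah_nonneg t) (one_le_mah u)

lemma abs_coeff_le (s : Multiset ℂ) (k : ℕ) :
    Complex.abs (((s.map fun a => X - C a).prod).coeff k)
      ≤ 2 ^ Multiset.card s * mah s := by
  have hRHS : (0:ℝ) ≤ 2 ^ Multiset.card s * mah s :=
    mul_nonneg (by positivity) (mah_nonneg s)
  rcases le_or_gt k (Multiset.card s) with hk | hk
  · rw [Multiset.prod_X_sub_C_coeff s hk]
    rw [map_mul, map_pow, AbsoluteValue.map_neg, map_one, one_pow, one_mul]
    -- bound |esymm|
    rw [Multiset.esymm]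
    set T := (s.powersetCard (Multiset.card s - k)).map Multiset.prod with hT
    calc Complex.abs T.sum ≤ (T.map Complex.abs).sum := by
          have h := norm_multiset_sum_le T
          simp only [Complex.norm_eq_abs] at h
          convert h using 2
      _ ≤ 2 ^ Multiset.card s * mah s := ?_
    · -- each term ≤ mah s, number of terms = choose ≤ 2^card
      have hterm : ∀ x ∈ T.map Complex.abs, x ≤ mah s := by
        intro x hx
        obtain ⟨z, hz, rfl⟩ := Multiset.mem_map.1 hx
        obtain ⟨t, ht, rfl⟩ := Multiset.mem_map.1 hz
        have htle : t ≤ s := (Multiset.mem_powersetCard.1 ht).1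
        calc Complex.abs t.prod = (t.map Complex.abs).prod := map_multiset_prod Complex.abs t
          _ ≤ mah t := prod_abs_le_mah_self t
          _ ≤ mah s := mah_mono htle
      have := Multiset.sum_le_card_nsmul _ _ hterm
      refine le_trans this ?_
      rw [hT, Multiset.card_map, Multiset.card_map, Multiset.card_powersetCard, nsmul_eq_mul]
      have hchoose : ((Multiset.card s).choose (Multiset.card s - k) : ℝ)
          ≤ 2 ^ Multiset.card s := by
        have h1 : (Multiset.card s).choose (Multiset.card s - k) ≤ 2 ^ Multiset.card s := by
          calc (Multiset.card s).choose (Multiset.card s - k)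
              ≤ ∑ m ∈ Finset.range (Multiset.card s + 1), (Multiset.card s).choose m :=
                Finset.single_le_sum (fun _ _ => Nat.zero_le _)
                  (Finset.mem_range.2 (by omega))
            _ = 2 ^ Multiset.card s := Nat.sum_range_choose _
        exact_mod_cast h1
      exact mul_le_mul hchoose le_rfl (mah_nonneg s) (by positivity)
  · rw [Polynomial.coeff_eq_zero_of_natDegree_lt, map_zero]
    · exact hRHS
    · rwa [Polynomial.natDegree_multiset_prod_X_sub_C_eq_card]


-- the Blaschke factor
noncomputable def bfac (a : ℂ) : Polynomial ℂ :=
  if Complex.abs a ≤ 1 then X - C a else C ((starRingEnd ℂ) a) * X - C 1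

lemma bfac_natDegree (a : ℂ) : (bfac a).natDegree = 1 := by
  rw [bfac]
  split_ifs with h
  · exact natDegree_X_sub_C a
  · rw [sub_eq_add_neg, ← map_neg C]
    refine natDegree_linear (fun h0 => ?_)
    rw [map_eq_zero_iff _ (starRingEnd ℂ).injective] at h0
    rw [h0] at h
    simp at h

lemma bfac_ne_zero (a : ℂ) : bfac a ≠ 0 := fun h => by
  have := bfac_natDegree a; rw [h] at this; simp at this

lemma abs_leadingCoeff_bfac (a : ℂ) : Complex.abs (bfac a).leadingCoeff = max 1 (Complex.abs a) := by
  rw [bfac]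
  split_ifs with h
  · rw [leadingCoeff_X_sub_C, map_one, max_eq_left h]
  · push_neg at h
    rw [sub_eq_add_neg, ← map_neg C, leadingCoeff_linear, Complex.abs_conj,
      max_eq_right h.le]
    intro h0
    rw [map_eq_zero_iff _ (starRingEnd ℂ).injective] at h0
    rw [h0] at h
    simp at h
    linarith

lemma abs_eval_bfac {z : ℂ} (hz : Complex.abs z = 1) (a : ℂ) :
    Complex.abs ((bfac a).eval z) = Complex.abs (z - a) := by
  rw [bfac]
  split_ifs with h
  · simp
  · simp only [eval_sub, eval_mul, eval_C, eval_X, eval_one]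
    have hz1 : z * (starRingEnd ℂ) z = 1 := by
      rw [Complex.mul_conj]
      norm_cast
      rw [Complex.normSq_eq_abs, hz]; norm_num
    have : (starRingEnd ℂ) a * z - 1 = z * ((starRingEnd ℂ) a - (starRingEnd ℂ) z) := by
      rw [mul_sub, hz1, mul_comm z]
    rw [this, map_mul, hz, one_mul, ← map_sub, Complex.abs_conj, AbsoluteValue.map_sub]



lemma mah_le_height (s : Multiset ℂ) (H : ℝ)
    (hH : ∀ k : ℕ, Complex.abs (((s.map fun a => X - C a).prod).coeff k) ≤ H) :
    mah s ≤ ((Multiset.card s : ℝ) + 1) * H := by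
  set D := Multiset.card s with hD
  set N := D + 1 with hNdef
  set p := (s.map fun a => X - C a).prod with hp
  set F := (s.map bfac).prod with hF
  have hHnn : 0 ≤ H := le_trans (AbsoluteValue.nonneg _ _) (hH 0)
  have hdegp : p.natDegree = D := natDegree_multiset_prod_X_sub_C_eq_card s
  have h0F : (0 : Polynomial ℂ) ∉ s.map bfac := by
    intro h
    obtain ⟨a, -, ha⟩ := Multiset.mem_map.1 h
    exact bfac_ne_zero a ha
  have hdegF : F.natDegree = D := by
    rw [hF, natDegree_multiset_prod _ h0F, Multiset.map_map]
    rw [show Multiset.map (natDegree ∘ bfac) s = Multiset.map (fun _ => 1) s from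
      Multiset.map_congr rfl (fun a _ => bfac_natDegree a)]
    simp [hD]
  have hcoeffD : Complex.abs (F.coeff D) = mah s := by
    rw [← hdegF, coeff_natDegree, hF, leadingCoeff_multiset_prod, Multiset.map_map,
      map_multiset_prod Complex.abs, Multiset.map_map, mah]
    exact congrArg _ (Multiset.map_congr rfl fun a _ => abs_leadingCoeff_bfac a)
  have hevalF : ∀ z : ℂ, Complex.abs z = 1 →
      Complex.abs (F.eval z) = Complex.abs (p.eval z) := by
    intro z hz
    rw [hF, hp, eval_multiset_prod, eval_multiset_prod,
      map_multiset_prod Complex.abs, map_multiset_prod Complex.abs,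
      Multiset.map_map, Multiset.map_map, Multiset.map_map, Multiset.map_map]
    refine congrArg _ (Multiset.map_congr rfl fun a _ => ?_)
    simp only [Function.comp_apply, eval_sub, eval_X, eval_C]
    exact abs_eval_bfac hz a
  have hevalp : ∀ z : ℂ, Complex.abs z = 1 → Complex.abs (p.eval z) ≤ N * H := by
    intro z hz
    rw [eval_eq_sum_range, hdegp]
    calc Complex.abs (∑ j ∈ Finset.range N, p.coeff j * z ^ j)
        ≤ ∑ j ∈ Finset.range N, Complex.abs (p.coeff j * z ^ j) :=
          AbsoluteValue.sum_le _ _ _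
      _ ≤ ∑ _j ∈ Finset.range N, H := by
          refine Finset.sum_le_sum fun j _ => ?_
          rw [map_mul, map_pow, hz, one_pow, mul_one]
          exact hH j
      _ = N * H := by rw [Finset.sum_const, Finset.card_range, nsmul_eq_mul]
  set ζ := Complex.exp (2 * Real.pi * Complex.I / N) with hζdef
  have hζ : IsPrimitiveRoot ζ N := Complex.isPrimitiveRoot_exp N (by omega)
  have habsζ : Complex.abs ζ = 1 := by
    rw [hζdef, Complex.abs_exp]
    norm_num [Complex.div_re, Complex.mul_re, Complex.mul_im]
  have habs_pow : ∀ k : ℕ, Complex.abs (ζ ^ k) = 1 := fun k => by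
    rw [map_pow, habsζ, one_pow]
  have hgeom : ∀ j < N, ∑ k ∈ Finset.range N, (ζ ^ (j + 1)) ^ k
      = if j = D then (N : ℂ) else 0 := by
    intro j hj
    by_cases hjD : j = D
    · subst hjD
      rw [if_pos rfl]
      have h1 : ζ ^ (D + 1) = 1 := by
        have := hζ.pow_eq_one
        rwa [hNdef] at this
      simp [h1]
    · rw [if_neg hjD]
      have h1 : ζ ^ (j + 1) ≠ 1 :=
        hζ.pow_ne_one_of_pos_of_lt (by omega) (by omega)
      have h2 : (ζ ^ (j + 1)) ^ N = 1 := by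
        rw [← pow_mul, mul_comm, pow_mul, hζ.pow_eq_one, one_pow]
      have h3 : (∑ k ∈ Finset.range N, (ζ ^ (j + 1)) ^ k) * (ζ ^ (j + 1) - 1) = 0 := by
        rw [geom_sum_mul, h2, sub_self]
      exact (mul_eq_zero.1 h3).resolve_right (sub_ne_zero.2 h1)
  have key : (N : ℂ) * F.coeff D = ∑ k ∈ Finset.range N, F.eval (ζ ^ k) * ζ ^ k := by
    have step1 : ∀ k : ℕ, F.eval (ζ ^ k) * ζ ^ k
        = ∑ j ∈ Finset.range N, F.coeff j * (ζ ^ (j + 1)) ^ k := by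
      intro k
      rw [eval_eq_sum_range, hdegF, Finset.sum_mul]
      refine Finset.sum_congr rfl fun j _ => ?_
      rw [mul_assoc]
      congr 1
      rw [← pow_mul, mul_comm k j, pow_mul, ← mul_pow, ← pow_succ]
    calc (N : ℂ) * F.coeff D = F.coeff D * (N : ℂ) := mul_comm _ _
      _ = ∑ j ∈ Finset.range N, F.coeff j * (if j = D then (N : ℂ) else 0) := by
          rw [Finset.sum_eq_single D]
          · rw [if_pos rfl]
          · intro j _ hjD; rw [if_neg hjD, mul_zero]
          · intro h; exact absurd (Finset.mem_range.2 (by omega)) h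
      _ = ∑ j ∈ Finset.range N, F.coeff j * ∑ k ∈ Finset.range N, (ζ ^ (j + 1)) ^ k := by
          refine Finset.sum_congr rfl fun j hj => ?_
          rw [hgeom j (Finset.mem_range.1 hj)]
      _ = ∑ j ∈ Finset.range N, ∑ k ∈ Finset.range N, F.coeff j * (ζ ^ (j + 1)) ^ k := by
          simp_rw [Finset.mul_sum]
      _ = ∑ k ∈ Finset.range N, ∑ j ∈ Finset.range N, F.coeff j * (ζ ^ (j + 1)) ^ k :=
          Finset.sum_comm
      _ = ∑ k ∈ Finset.range N, F.eval (ζ ^ k) * ζ ^ k := by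
          refine Finset.sum_congr rfl fun k _ => (step1 k).symm
  have main : (N : ℝ) * Complex.abs (F.coeff D) ≤ (N : ℝ) * ((N : ℝ) * H) := by
    have h1 : Complex.abs ((N : ℂ) * F.coeff D) = (N : ℝ) * Complex.abs (F.coeff D) := by
      rw [map_mul, Complex.abs_natCast]
    rw [← h1, key]
    calc Complex.abs (∑ k ∈ Finset.range N, F.eval (ζ ^ k) * ζ ^ k)
        ≤ ∑ k ∈ Finset.range N, Complex.abs (F.eval (ζ ^ k) * ζ ^ k) :=
          AbsoluteValue.sum_le _ _ _
      _ ≤ ∑ _k ∈ Finset.range N, (N : ℝ) * H := by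
          refine Finset.sum_le_sum fun k _ => ?_
          rw [map_mul, habs_pow k, mul_one, hevalF _ (habs_pow k)]
          exact hevalp _ (habs_pow k)
      _ = (N : ℝ) * ((N : ℝ) * H) := by
          rw [Finset.sum_const, Finset.card_range, nsmul_eq_mul]
  have hNpos : (0 : ℝ) < (N : ℝ) := by positivity
  have := le_of_mul_le_mul_left main hNpos
  rw [hcoeffD] at this
  calc mah s ≤ (N : ℝ) * H := this
    _ = ((D : ℝ) + 1) * H := by rw [hNdef]; push_cast; ring


end CHBAux

open CHBAux

/-- For a subfield `E ⊆ ℂ` of finite degree `d` over `ℚ` and `b ∈ E`,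
`PE E b = ∏_{σ : E →+* ℂ} max 1 |σ b|` is the `d`-th power of the absolute
multiplicative Weil height of `b`. -/
noncomputable def PE (E : IntermediateField ℚ ℂ) (b : E) : ℝ :=
  ∏ᶠ σ : (E →+* ℂ), max 1 (‖σ b‖)

theorem coefficient_height_bound (n1 n2 : ℕ) (h1 : 1 ≤ n1) (h2 : 1 ≤ n2) :
    ∃ c > (0 : ℝ),
      ∀ (E : IntermediateField ℚ ℂ), FiniteDimensional ℚ E →
        Module.finrank ℚ E = n1 →
        ∀ b : Fin n2 → E,
          IntermediateField.adjoin ℚ (Set.range fun i => (b i : ℂ)) = E →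
          ∀ g : Polynomial E, g = X ^ n2 + ∑ i : Fin n2, C (b i) * X ^ (i : ℕ) →
          ∀ f : Polynomial ℂ, f = ∏ᶠ σ : (E →+* ℂ), g.map (σ : E →+* ℂ) →
          ∀ i : Fin n2, PE E (b i) ≤ c * ⨆ j : ℕ, ‖f.coeff j‖ := by
  refine ⟨2 ^ (n1 * n2) * ((n1 * n2 : ℕ) + 1), by positivity, ?_⟩
  intro E hfd hrank b _ g hg f hf i
  haveI := hfd
  haveI : NumberField E := ⟨⟩
  have hcard : Fintype.card (E →+* ℂ) = n1 := by
    rw [NumberField.Embeddings.card E ℂ, hrank]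
  -- facts about g
  have hdeg_sum : (∑ i : Fin n2, C (b i) * X ^ (i : ℕ)).degree < ((n2 : ℕ) : WithBot ℕ) := by
    refine lt_of_le_of_lt (degree_sum_le _ _) ?_
    rw [Finset.sup_lt_iff (by exact_mod_cast WithBot.bot_lt_coe n2)]
    intro j _
    exact lt_of_le_of_lt (degree_C_mul_X_pow_le _ _) (by exact_mod_cast j.2)
  have hgmonic : g.Monic := by rw [hg]; exact monic_X_pow_add hdeg_sum
  have hgdeg : g.natDegree = n2 := by
    have hdeg : g.degree = n2 := by
      rw [hg, add_comm]
      rw [degree_add_eq_right_of_degree_lt (by rwa [degree_X_pow])]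
      exact degree_X_pow n2
    exact natDegree_eq_of_degree_eq_some hdeg
  have hgcoeff : ∀ i : Fin n2, g.coeff i = b i := by
    intro i
    rw [hg, coeff_add, coeff_X_pow, if_neg (by omega : (i : ℕ) ≠ n2), zero_add,
      finset_sum_coeff]
    have : ∀ j : Fin n2, (C (b j) * X ^ (j : ℕ)).coeff (i : ℕ)
        = if j = i then b j else 0 := by
      intro j
      rw [coeff_C_mul, coeff_X_pow]
      by_cases h : j = i
      · subst h; simp
      · rw [if_neg h, if_neg (fun hji => h (Fin.ext hji.symm)), mul_zero]
    rw [Finset.sum_congr rfl fun j _ => this j]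
    simp
  -- per-embedding data
  have hsplits : ∀ σ : E →+* ℂ, Splits (g.map σ) := fun σ =>
    IsAlgClosed.splits _
  have hfac : ∀ σ : E →+* ℂ,
      g.map σ = ((g.map σ).roots.map fun a => X - C a).prod := fun σ =>
    (hsplits σ).eq_prod_roots_of_monic (hgmonic.map σ)
  have hrcard : ∀ σ : E →+* ℂ, Multiset.card (g.map σ).roots = n2 := fun σ => by
    rw [splits_iff_card_roots.1 (hsplits σ), hgmonic.natDegree_map, hgdeg]
  -- f as a product over the combined root multiset
  set S : Multiset ℂ := ∑ σ : E →+* ℂ, (g.map σ).roots with hS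
  have hf' : f = ∏ σ : E →+* ℂ, g.map σ := by rw [hf, finprod_eq_prod_of_fintype]
  have hmapS : S.map (fun a => X - C a)
      = ∑ σ : E →+* ℂ, ((g.map σ).roots.map fun a => X - C a) := by
    rw [hS]
    exact map_sum (Multiset.mapAddMonoidHom fun a => X - C a) _ Finset.univ
  have hfS : f = (S.map fun a => X - C a).prod := by
    rw [hf', hmapS, Multiset.prod_sum]
    exact Finset.prod_congr rfl fun σ _ => hfac σ
  have hScard : Multiset.card S = n1 * n2 := by
    have : Multiset.card S = ∑ σ : E →+* ℂ, Multiset.card (g.map σ).roots := by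
      rw [hS]
      exact map_sum (⟨⟨Multiset.card, Multiset.card_zero⟩, Multiset.card_add⟩ :
        Multiset ℂ →+ ℕ) _ Finset.univ
    rw [this]
    simp only [hrcard]
    rw [Finset.sum_const, Finset.card_univ, hcard, smul_eq_mul]
  have hmahS : mah S = ∏ σ : E →+* ℂ, mah (g.map σ).roots := by
    have hm : S.map (fun a => max 1 (Complex.abs a))
        = ∑ σ : E →+* ℂ, ((g.map σ).roots.map fun a => max 1 (Complex.abs a)) := by
      rw [hS]
      exact map_sum (Multiset.mapAddMonoidHom fun a => max 1 (Complex.abs a)) _ Finset.univ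
    rw [mah, hm, Multiset.prod_sum]
    rfl
  -- the height H
  set H : ℝ := ⨆ j : ℕ, Complex.abs (f.coeff j) with hH
  have hbdd : BddAbove (Set.range fun j : ℕ => Complex.abs (f.coeff j)) := by
    refine ⟨∑ j ∈ Finset.range (f.natDegree + 1), Complex.abs (f.coeff j), ?_⟩
    rintro x ⟨j, rfl⟩
    show Complex.abs (f.coeff j) ≤ _
    by_cases hj : j ≤ f.natDegree
    · exact Finset.single_le_sum (f := fun k => Complex.abs (f.coeff k))
        (fun k _ => AbsoluteValue.nonneg Complex.abs _) (Finset.mem_range.2 (by omega))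
    · rw [coeff_eq_zero_of_natDegree_lt (by omega), map_zero]
      exact Finset.sum_nonneg fun k _ => AbsoluteValue.nonneg Complex.abs _
  have hcoeffH : ∀ k : ℕ, Complex.abs (f.coeff k) ≤ H := fun k =>
    le_ciSup hbdd k
  -- per-embedding max bound
  have hperσ : ∀ σ : E →+* ℂ,
      max 1 (Complex.abs (σ (b i))) ≤ 2 ^ n2 * mah (g.map σ).roots := by
    intro σ
    refine max_le ?_ ?_
    · calc (1 : ℝ) ≤ mah (g.map σ).roots := one_le_mah _
        _ ≤ 2 ^ n2 * mah (g.map σ).roots :=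
            le_mul_of_one_le_left (mah_nonneg _) (by
              calc (1:ℝ) = 1 ^ n2 := (one_pow n2).symm
                _ ≤ 2 ^ n2 := pow_le_pow_left₀ zero_le_one (by norm_num) n2)
    · have h1 : Complex.abs (σ (b i)) = Complex.abs
          ((((g.map σ).roots.map fun a => X - C a).prod).coeff i) := by
        rw [← hfac σ, coeff_map, hgcoeff i]
      rw [h1]
      have := abs_coeff_le (g.map σ).roots i
      rwa [hrcard σ] at this
  -- main chain
  rw [show PE E (b i) = ∏ᶠ σ : (E →+* ℂ), max 1 (Complex.abs (σ (b i))) from rfl,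
    finprod_eq_prod_of_fintype]
  calc ∏ σ : E →+* ℂ, max 1 (Complex.abs (σ (b i)))
      ≤ ∏ σ : E →+* ℂ, (2 ^ n2 * mah (g.map σ).roots) := by
        refine Finset.prod_le_prod (fun σ _ => ?_) (fun σ _ => hperσ σ)
        exact le_trans zero_le_one (le_max_left _ _)
    _ = 2 ^ (n1 * n2) * mah S := by
        rw [Finset.prod_mul_distrib, Finset.prod_const, Finset.card_univ, hcard, hmahS,
          ← pow_mul, mul_comm n2 n1]
    _ ≤ 2 ^ (n1 * n2) * (((n1 * n2 : ℕ) : ℝ) + 1) * H := by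
        rw [mul_assoc]
        refine mul_le_mul_of_nonneg_left ?_ (by positivity)
        have := mah_le_height S H (fun k => by rw [← hfS]; exact hcoeffH k)
        rwa [hScard] at this
    _ = 2 ^ (n1 * n2) * ((n1 * n2 : ℕ) + 1) * H := by norm_num
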